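/- arXiv:2505.22449 — 2 statements merged into one kernel-verified Lean document; each statement's English description precedes it below -/
import Mathlib

section
/- Fix 0 < b₂ < b₁. Let X ~ Lap(0, b₂), and let W be drawn independently as 0 with probability b₂²/b₁², and as Lap(0, b₁) otherwise. Then X + W ~ Lap(0, b₁). -/
open MeasureTheory
open scoped ENNReal
set_option maxHeartbeats 1000000

/-- Density of the zero-centered Laplace distribution with scale `b`. -/
noncomputable def laplacePDFReal (b x : ℝ) : ℝ := (1 / (2 * b)) * Real.exp (-|x| / b)

/-- The zero-centered Laplace distribution with scale `b`. -/
noncomputable def laplaceMeasure (b : ℝ) : Measure ℝ :=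
  volume.withDensity fun x => ENNReal.ofReal (laplacePDFReal b x)

/-- The mixture that is a point mass at `0` with probability `b₂² / b₁²` and
`Lap(0, b₁)` with the remaining probability. -/
noncomputable def lapBridge (b₂ b₁ : ℝ) : Measure ℝ :=
  ENNReal.ofReal (b₂ ^ 2 / b₁ ^ 2) • Measure.dirac 0 +
    ENNReal.ofReal (1 - b₂ ^ 2 / b₁ ^ 2) • laplaceMeasure b₁

section Aux

open Real Set Filter

lemma aux_measurable_lapPDF (b : ℝ) : Measurable (laplacePDFReal b) := by
  unfold laplacePDFReal; fun_prop

lemma aux_lapPDF_nonneg {b : ℝ} (hb : 0 < b) (x : ℝ) : 0 ≤ laplacePDFReal b x := by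
  unfold laplacePDFReal; positivity

lemma aux_lapPDF_le {b : ℝ} (hb : 0 < b) (x : ℝ) : laplacePDFReal b x ≤ 1 / (2 * b) := by
  unfold laplacePDFReal
  have h1 : Real.exp (-|x| / b) ≤ 1 := by
    rw [Real.exp_le_one_iff]
    have : 0 ≤ |x| / b := by positivity
    linarith [neg_div b |x|]
  calc (1 / (2 * b)) * Real.exp (-|x| / b) ≤ (1 / (2 * b)) * 1 := by
        apply mul_le_mul_of_nonneg_left h1 (by positivity)
    _ = 1 / (2 * b) := mul_one _

lemma aux_exp_hasDeriv {c : ℝ} (hc : c ≠ 0) (x : ℝ) :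
    HasDerivAt (fun y => Real.exp (c * y) / c) (Real.exp (c * x)) x := by
  have h0 : HasDerivAt (fun y : ℝ => c * y) c x := by
    simpa using (hasDerivAt_id x).const_mul c
  have h := (h0.exp).div_const c
  exact h.congr_deriv (mul_div_cancel_right₀ _ hc)

lemma aux_exp_neg_hasDeriv {c : ℝ} (hc : c ≠ 0) (x : ℝ) :
    HasDerivAt (fun y => -Real.exp (-(c * y)) / c) (Real.exp (-(c * x))) x := by
  have h0 : HasDerivAt (fun y : ℝ => -(c * y)) (-c) x := by
    exact (((hasDerivAt_id x).const_mul c).neg).congr_deriv (by simp)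
  have h := ((h0.exp).div_const c).neg
  have hf : (fun y => -Real.exp (-(c * y)) / c) = fun y => -(Real.exp (-(c * y)) / c) := by
    funext y; ring
  rw [hf]
  exact h.congr_deriv (by rw [mul_neg, neg_div, neg_neg, mul_div_cancel_right₀ _ hc])

lemma aux_intOn_exp_Iic {c : ℝ} (hc : 0 < c) (a : ℝ) :
    IntegrableOn (fun x => Real.exp (c * x)) (Iic a) := by
  refine integrableOn_Iic_of_intervalIntegral_norm_bounded (Real.exp (c * a) / c) a
    (fun y => (Continuous.integrableOn_Ioc (by fun_prop))) tendsto_id ?_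
  filter_upwards [eventually_le_atBot a] with y hy
  simp only [id_eq]
  have h1 : (∫ x in y..a, ‖Real.exp (c * x)‖) = ∫ x in y..a, Real.exp (c * x) := by
    congr 1; funext x; rw [Real.norm_eq_abs, abs_of_pos (Real.exp_pos _)]
  rw [h1, intervalIntegral.integral_eq_sub_of_hasDerivAt
    (fun t _ => aux_exp_hasDeriv hc.ne' t) (Continuous.intervalIntegrable (by fun_prop) _ _)]
  have h2 : 0 < Real.exp (c * y) / c := by positivity
  linarith

lemma aux_int_exp_Iic {c : ℝ} (hc : 0 < c) (a : ℝ) :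
    ∫ x in Iic a, Real.exp (c * x) = Real.exp (c * a) / c := by
  have hlim : Tendsto (fun y => Real.exp (c * y) / c) atBot (nhds 0) := by
    have h1 : Tendsto (fun y : ℝ => c * y) atBot atBot :=
      Tendsto.const_mul_atBot hc tendsto_id
    have := (Real.tendsto_exp_atBot.comp h1).div_const c
    simpa using this
  have := integral_Iic_of_hasDerivAt_of_tendsto'
    (f := fun y => Real.exp (c * y) / c) (f' := fun x => Real.exp (c * x))
    (a := a) (m := 0)
    (fun x _ => aux_exp_hasDeriv hc.ne' x) (aux_intOn_exp_Iic hc a) hlim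
  simpa using this

lemma aux_intOn_exp_neg_Ioi {c : ℝ} (hc : 0 < c) (a : ℝ) :
    IntegrableOn (fun x => Real.exp (-(c * x))) (Ioi a) := by
  refine integrableOn_Ioi_of_intervalIntegral_norm_bounded (Real.exp (-(c * a)) / c) a
    (fun y => (Continuous.integrableOn_Ioc (by fun_prop))) tendsto_id ?_
  filter_upwards [eventually_ge_atTop a] with y hy
  simp only [id_eq]
  have h1 : (∫ x in a..y, ‖Real.exp (-(c * x))‖) = ∫ x in a..y, Real.exp (-(c * x)) := by
    congr 1; funext x; rw [Real.norm_eq_abs, abs_of_pos (Real.exp_pos _)]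
  rw [h1, intervalIntegral.integral_eq_sub_of_hasDerivAt
    (fun t _ => aux_exp_neg_hasDeriv hc.ne' t) (Continuous.intervalIntegrable (by fun_prop) _ _)]
  have h2 : 0 < Real.exp (-(c * y)) / c := by positivity
  have h3 : -Real.exp (-(c * y)) / c = -(Real.exp (-(c * y)) / c) := by ring
  have h4 : -Real.exp (-(c * a)) / c = -(Real.exp (-(c * a)) / c) := by ring
  rw [h3, h4]; linarith

lemma aux_int_exp_neg_Ioi {c : ℝ} (hc : 0 < c) (a : ℝ) :
    ∫ x in Ioi a, Real.exp (-(c * x)) = Real.exp (-(c * a)) / c := by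
  have hlim : Tendsto (fun y => -Real.exp (-(c * y)) / c) atTop (nhds 0) := by
    have h1 : Tendsto (fun y : ℝ => -(c * y)) atTop atBot := by
      have : Tendsto (fun y : ℝ => c * y) atTop atTop :=
        Tendsto.const_mul_atTop hc tendsto_id
      exact tendsto_neg_atBot_iff.mpr this
    have := ((Real.tendsto_exp_atBot.comp h1).div_const c).neg
    simpa [neg_div] using this
  have := integral_Ioi_of_hasDerivAt_of_tendsto'
    (f := fun y => -Real.exp (-(c * y)) / c) (f' := fun x => Real.exp (-(c * x)))
    (a := a) (m := 0)
    (fun x _ => aux_exp_neg_hasDeriv hc.ne' x) (aux_intOn_exp_neg_Ioi hc a) hlim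
  rw [this]; ring

lemma aux_int_exp_Ioc {c : ℝ} (hc : c ≠ 0) {u v : ℝ} (huv : u ≤ v) :
    ∫ x in Ioc u v, Real.exp (c * x) = (Real.exp (c * v) - Real.exp (c * u)) / c := by
  rw [← intervalIntegral.integral_of_le huv,
    intervalIntegral.integral_eq_sub_of_hasDerivAt
      (fun t _ => aux_exp_hasDeriv hc t) (Continuous.intervalIntegrable (by fun_prop) _ _)]
  ring

lemma aux_integrable_lapPDF {b : ℝ} (hb : 0 < b) : Integrable (laplacePDFReal b) := by
  have hbinv : (0:ℝ) < b⁻¹ := by positivity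
  have h1 : IntegrableOn (laplacePDFReal b) (Iic 0) := by
    have hbase : IntegrableOn (fun x => (1 / (2 * b)) * Real.exp (b⁻¹ * x)) (Iic 0) :=
      (aux_intOn_exp_Iic hbinv 0).const_mul (1 / (2 * b))
    refine hbase.congr_fun (fun x hx => ?_) measurableSet_Iic
    unfold laplacePDFReal
    rw [abs_of_nonpos (mem_Iic.mp hx)]
    congr 1
    field_simp
  have h2 : IntegrableOn (laplacePDFReal b) (Ioi 0) := by
    have hbase : IntegrableOn (fun x => (1 / (2 * b)) * Real.exp (-(b⁻¹ * x))) (Ioi 0) :=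
      (aux_intOn_exp_neg_Ioi hbinv 0).const_mul (1 / (2 * b))
    refine hbase.congr_fun (fun x hx => ?_) measurableSet_Ioi
    unfold laplacePDFReal
    rw [abs_of_pos (mem_Ioi.mp hx)]
    congr 1
    field_simp
  rw [← integrableOn_univ, ← Iic_union_Ioi (a := (0:ℝ))]
  exact h1.union h2

lemma aux_conv_withDensity (f g : ℝ → ℝ≥0∞) (hf : Measurable f) (hg : Measurable g) :
    (volume.withDensity f).conv (volume.withDensity g) =
      volume.withDensity (fun z => ∫⁻ x, f x * g (z - x)) := by
  have hgsub : Measurable fun p : ℝ × ℝ => g (p.2 - p.1) :=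
    hg.comp (measurable_snd.sub measurable_fst)
  have hdens : Measurable fun z => ∫⁻ x, f x * g (z - x) := by
    apply Measurable.lintegral_prod_right (f := fun z x => f x * g (z - x))
    exact (hf.comp measurable_snd).mul (hg.comp (measurable_fst.sub measurable_snd))
  unfold Measure.conv
  ext s hs
  have hpre : MeasurableSet ((fun p : ℝ × ℝ => p.1 + p.2) ⁻¹' s) := measurable_add hs
  have hind : Measurable (s.indicator (1 : ℝ → ℝ≥0∞)) := measurable_one.indicator hs
  rw [Measure.map_apply measurable_add hs, Measure.prod_apply hpre]
  have h1 : ∀ x : ℝ,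
      (volume.withDensity g) (Prod.mk x ⁻¹' ((fun p : ℝ × ℝ => p.1 + p.2) ⁻¹' s)) =
        ∫⁻ y, s.indicator (1 : ℝ → ℝ≥0∞) (x + y) * g y := by
    intro x
    have hset : MeasurableSet ((fun y : ℝ => x + y) ⁻¹' s) :=
      (measurable_const.add measurable_id) hs
    have : Prod.mk x ⁻¹' ((fun p : ℝ × ℝ => p.1 + p.2) ⁻¹' s) = (fun y : ℝ => x + y) ⁻¹' s := rfl
    rw [this, withDensity_apply _ hset, ← lintegral_indicator hset]
    refine lintegral_congr fun y => ?_
    by_cases h : x + y ∈ s <;> simp [Set.indicator, h]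
  rw [lintegral_congr h1]
  have hinner : Measurable fun x => ∫⁻ y, s.indicator (1 : ℝ → ℝ≥0∞) (x + y) * g y := by
    apply Measurable.lintegral_prod_right (f := fun x y => s.indicator (1:ℝ→ℝ≥0∞) (x+y) * g y)
    exact ((hind.comp (measurable_fst.add measurable_snd)).mul (hg.comp measurable_snd))
  rw [lintegral_withDensity_eq_lintegral_mul volume hf hinner]
  have h2 : ∀ x : ℝ, f x * ∫⁻ y, s.indicator (1 : ℝ → ℝ≥0∞) (x + y) * g y =
      ∫⁻ z, f x * (s.indicator (1 : ℝ → ℝ≥0∞) z * g (z - x)) := by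
    intro x
    have hmx : Measurable fun y : ℝ => s.indicator (1 : ℝ → ℝ≥0∞) (x + y) * g y :=
      (hind.comp (measurable_const.add measurable_id)).mul hg
    rw [← lintegral_const_mul (f x) hmx]
    have := lintegral_add_left_eq_self (μ := (volume : Measure ℝ))
      (fun z => f x * (s.indicator (1 : ℝ → ℝ≥0∞) z * g (z - x))) x
    rw [← this]
    refine lintegral_congr fun y => ?_
    simp [add_sub_cancel_left]
  simp only [Pi.mul_apply]
  rw [lintegral_congr h2, lintegral_lintegral_swap]
  · rw [withDensity_apply _ hs, ← lintegral_indicator hs]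
    refine lintegral_congr fun z => ?_
    by_cases h : z ∈ s
    · simp only [Set.indicator_of_mem h, Pi.one_apply, one_mul]
    · simp [Set.indicator_of_notMem h]
  · apply Measurable.aemeasurable
    exact (hf.comp measurable_fst).mul
      (((hind.comp measurable_snd)).mul (hg.comp (measurable_snd.sub measurable_fst)))

lemma aux_integrable_r {b₁ b₂ : ℝ} (hb₂ : 0 < b₂) (hb : b₂ < b₁) (z : ℝ) :
    Integrable (fun x => laplacePDFReal b₂ x * laplacePDFReal b₁ (z - x)) := by
  have hb₁ : 0 < b₁ := hb₂.trans hb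
  have hm : AEStronglyMeasurable (fun x => laplacePDFReal b₁ (z - x)) volume :=
    ((aux_measurable_lapPDF b₁).comp (measurable_const.sub measurable_id)).aestronglyMeasurable
  have h := (aux_integrable_lapPDF hb₂).bdd_mul hm (c := 1 / (2 * b₁)) (Eventually.of_forall fun x => by
    simp only [Real.norm_eq_abs]
    rw [abs_of_nonneg (aux_lapPDF_nonneg hb₁ (z - x))]
    exact aux_lapPDF_le hb₁ _)
  have heq : (fun x => laplacePDFReal b₁ (z - x) * laplacePDFReal b₂ x)
      = fun x => laplacePDFReal b₂ x * laplacePDFReal b₁ (z - x) := by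
    funext x; ring
  rwa [heq] at h

lemma aux_lap_conv_real_nonneg {b₁ b₂ : ℝ} (hb₂ : 0 < b₂) (hb : b₂ < b₁) (z : ℝ) :
    0 ≤ (b₁ * Real.exp (-|z| / b₁) - b₂ * Real.exp (-|z| / b₂)) / (2 * (b₁ ^ 2 - b₂ ^ 2)) := by
  have hb₁ : 0 < b₁ := hb₂.trans hb
  have h1 : -|z| / b₂ ≤ -|z| / b₁ := by
    rw [neg_div, neg_div, neg_le_neg_iff]
    exact div_le_div_of_nonneg_left (abs_nonneg z) hb₂ hb.le
  have h2 : Real.exp (-|z| / b₂) ≤ Real.exp (-|z| / b₁) := Real.exp_le_exp.mpr h1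
  have h3 : b₂ * Real.exp (-|z| / b₂) ≤ b₁ * Real.exp (-|z| / b₁) :=
    mul_le_mul hb.le h2 (Real.exp_pos _).le hb₁.le
  have h4 : (0:ℝ) < 2 * (b₁ ^ 2 - b₂ ^ 2) := by nlinarith
  exact div_nonneg (by linarith) h4.le

lemma aux_lap_conv_real_of_nonneg {b₁ b₂ : ℝ} (hb₂ : 0 < b₂) (hb : b₂ < b₁) {z : ℝ}
    (hz : 0 ≤ z) :
    ∫ x, laplacePDFReal b₂ x * laplacePDFReal b₁ (z - x) =
      (b₁ * Real.exp (-z / b₁) - b₂ * Real.exp (-z / b₂)) / (2 * (b₁ ^ 2 - b₂ ^ 2)) := by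
  have hb₁ : 0 < b₁ := hb₂.trans hb
  have hcp : (0:ℝ) < 1 / b₂ + 1 / b₁ := by positivity
  have hcm : (1:ℝ) / b₁ - 1 / b₂ ≠ 0 := by
    have : (1:ℝ) / b₁ < 1 / b₂ := one_div_lt_one_div_of_lt hb₂ hb
    exact sub_ne_zero.mpr this.ne
  set r : ℝ → ℝ := fun x => laplacePDFReal b₂ x * laplacePDFReal b₁ (z - x) with hr
  have hrint : Integrable r := aux_integrable_r hb₂ hb z
  -- Piece A : over Iic 0
  have hA : ∫ x in Iic 0, r x =
      Real.exp (-z / b₁) / (4 * (b₁ + b₂)) := by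
    have hcongr : ∀ x ∈ Iic (0:ℝ), r x =
        (1 / (2 * b₂) * (1 / (2 * b₁))) *
          (Real.exp (-z / b₁) * Real.exp ((1 / b₂ + 1 / b₁) * x)) := by
      intro x hx
      have hx0 : x ≤ 0 := mem_Iic.mp hx
      simp only [hr, laplacePDFReal]
      rw [abs_of_nonpos hx0, abs_of_nonneg (by linarith : (0:ℝ) ≤ z - x)]
      rw [mul_mul_mul_comm, ← Real.exp_add, ← Real.exp_add]
      congr 1
      field_simp
      ring
    rw [setIntegral_congr_fun measurableSet_Iic hcongr]
    simp only [← mul_assoc]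
    rw [integral_const_mul, aux_int_exp_Iic hcp 0]
    rw [mul_zero, Real.exp_zero]
    field_simp
    ring
  -- Piece B : over Ioc 0 z
  have hB : ∫ x in Ioc 0 z, r x =
      (Real.exp (-z / b₂) - Real.exp (-z / b₁)) / (4 * (b₂ - b₁)) := by
    have hcongr : ∀ x ∈ Ioc (0:ℝ) z, r x =
        (1 / (2 * b₂) * (1 / (2 * b₁))) *
          (Real.exp (-z / b₁) * Real.exp ((1 / b₁ - 1 / b₂) * x)) := by
      intro x hx
      have hx1 : 0 < x := hx.1
      have hx2 : x ≤ z := hx.2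
      simp only [hr, laplacePDFReal]
      rw [abs_of_pos hx1, abs_of_nonneg (by linarith : (0:ℝ) ≤ z - x)]
      rw [mul_mul_mul_comm, ← Real.exp_add, ← Real.exp_add]
      congr 1
      field_simp
      ring
    rw [setIntegral_congr_fun measurableSet_Ioc hcongr]
    simp only [← mul_assoc]
    rw [integral_const_mul, aux_int_exp_Ioc hcm hz]
    have hX : Real.exp ((1 / b₁ - 1 / b₂) * z) =
        Real.exp (-z / b₂) / Real.exp (-z / b₁) := by
      rw [eq_div_iff (Real.exp_ne_zero _), ← Real.exp_add]; congr 1; ring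
    rw [mul_zero, Real.exp_zero, hX]
    have hne2 : b₂ - b₁ ≠ 0 := sub_ne_zero.mpr hb.ne
    field_simp
    ring
  -- Piece C : over Ioi z
  have hC : ∫ x in Ioi z, r x =
      Real.exp (-z / b₂) / (4 * (b₁ + b₂)) := by
    have hcongr : ∀ x ∈ Ioi z, r x =
        (1 / (2 * b₂) * (1 / (2 * b₁))) *
          (Real.exp (z / b₁) * Real.exp (-((1 / b₂ + 1 / b₁) * x))) := by
      intro x hx
      have hx1 : z < x := mem_Ioi.mp hx
      simp only [hr, laplacePDFReal]
      rw [abs_of_pos (by linarith : (0:ℝ) < x), abs_of_nonpos (by linarith : z - x ≤ 0)]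
      rw [mul_mul_mul_comm, ← Real.exp_add, ← Real.exp_add]
      congr 1
      field_simp
      ring
    rw [setIntegral_congr_fun measurableSet_Ioi hcongr]
    simp only [← mul_assoc]
    rw [integral_const_mul, aux_int_exp_neg_Ioi hcp z]
    have hY : Real.exp (-((1 / b₂ + 1 / b₁) * z)) =
        Real.exp (-z / b₂) / Real.exp (z / b₁) := by
      rw [eq_div_iff (Real.exp_ne_zero _), ← Real.exp_add]; congr 1; ring
    rw [hY]
    have hne1 : b₁ + b₂ ≠ 0 := by positivity
    field_simp
    ring
  -- Combine
  have hsplit : ∫ x, r x = (∫ x in Iic 0, r x) + ((∫ x in Ioc 0 z, r x) + (∫ x in Ioi z, r x)) := by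
    have hIoi0 : (∫ x in Ioi (0:ℝ), r x) = (∫ x in Ioc 0 z, r x) + (∫ x in Ioi z, r x) := by
      rw [← setIntegral_union (Ioc_disjoint_Ioi le_rfl) measurableSet_Ioi
        (hrint.integrableOn) (hrint.integrableOn), Ioc_union_Ioi_eq_Ioi hz]
    rw [← hIoi0, intervalIntegral.integral_Iic_add_Ioi hrint.integrableOn hrint.integrableOn]
  rw [hsplit, hA, hB, hC]
  have hne1 : b₁ + b₂ ≠ 0 := by positivity
  have hne2 : b₂ - b₁ ≠ 0 := sub_ne_zero.mpr hb.ne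
  have hne3 : b₁ ^ 2 - b₂ ^ 2 ≠ 0 := by
    intro h; apply hne2; nlinarith
  field_simp
  ring

lemma aux_lap_conv_real {b₁ b₂ : ℝ} (hb₂ : 0 < b₂) (hb : b₂ < b₁) (z : ℝ) :
    ∫ x, laplacePDFReal b₂ x * laplacePDFReal b₁ (z - x) =
      (b₁ * Real.exp (-|z| / b₁) - b₂ * Real.exp (-|z| / b₂)) / (2 * (b₁ ^ 2 - b₂ ^ 2)) := by
  rcases le_total 0 z with hz | hz
  · rw [abs_of_nonneg hz]
    exact aux_lap_conv_real_of_nonneg hb₂ hb hz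
  · have key := aux_lap_conv_real_of_nonneg hb₂ hb (z := -z) (by linarith)
    have hneg : (∫ x, laplacePDFReal b₂ x * laplacePDFReal b₁ (z - x)) =
        ∫ x, laplacePDFReal b₂ x * laplacePDFReal b₁ (-z - x) := by
      rw [← integral_neg_eq_self (fun x => laplacePDFReal b₂ x * laplacePDFReal b₁ (z - x))]
      refine integral_congr_ae (Eventually.of_forall fun x => ?_)
      unfold laplacePDFReal
      simp only [abs_neg]
      rw [show |z - -x| = |(-z) - x| by rw [← abs_neg]; congr 1; ring]
    rw [hneg, key, abs_of_nonpos hz]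

lemma aux_lap_conv_lintegral {b₁ b₂ : ℝ} (hb₂ : 0 < b₂) (hb : b₂ < b₁) (z : ℝ) :
    ∫⁻ x, ENNReal.ofReal (laplacePDFReal b₂ x) * ENNReal.ofReal (laplacePDFReal b₁ (z - x)) =
      ENNReal.ofReal
        ((b₁ * Real.exp (-|z| / b₁) - b₂ * Real.exp (-|z| / b₂)) / (2 * (b₁ ^ 2 - b₂ ^ 2))) := by
  have hb₁ : 0 < b₁ := hb₂.trans hb
  have h1 : ∀ x : ℝ, ENNReal.ofReal (laplacePDFReal b₂ x) *
      ENNReal.ofReal (laplacePDFReal b₁ (z - x)) =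
      ENNReal.ofReal (laplacePDFReal b₂ x * laplacePDFReal b₁ (z - x)) := fun x =>
    (ENNReal.ofReal_mul (aux_lapPDF_nonneg hb₂ x)).symm
  rw [lintegral_congr h1]
  have hrint : Integrable (fun x => laplacePDFReal b₂ x * laplacePDFReal b₁ (z - x)) :=
    aux_integrable_r hb₂ hb z
  rw [← ofReal_integral_eq_lintegral_ofReal hrint
    (Eventually.of_forall fun x =>
      mul_nonneg (aux_lapPDF_nonneg hb₂ x) (aux_lapPDF_nonneg hb₁ _))]
  exact congrArg ENNReal.ofReal (aux_lap_conv_real hb₂ hb z)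

lemma aux_conv_smul_right (μ ν : Measure ℝ) [SFinite μ] [SFinite ν] (c : ℝ≥0∞) :
    μ.conv (c • ν) = c • μ.conv ν := by
  unfold Measure.conv
  ext s hs
  have hpre : MeasurableSet ((fun p : ℝ × ℝ => p.1 + p.2) ⁻¹' s) := measurable_add hs
  rw [Measure.map_apply measurable_add hs, Measure.smul_apply,
    Measure.map_apply measurable_add hs, Measure.prod_apply hpre, Measure.prod_apply hpre,
    smul_eq_mul, ← lintegral_const_mul c (measurable_measure_prodMk_left hpre)]
  refine lintegral_congr fun x => ?_
  simp

end Aux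

theorem stmt_9 (b₁ b₂ : ℝ) (hb₂ : 0 < b₂) (hb : b₂ < b₁) :
    Measure.conv (laplaceMeasure b₂) (lapBridge b₂ b₁) = laplaceMeasure b₁ := by
  have hb₁ : 0 < b₁ := hb₂.trans hb
  haveI hS2 : SFinite (laplaceMeasure b₂) := by unfold laplaceMeasure; infer_instance
  haveI hS1 : SFinite (laplaceMeasure b₁) := by unfold laplaceMeasure; infer_instance
  have hmf : ∀ b : ℝ, Measurable fun x => ENNReal.ofReal (laplacePDFReal b x) := fun b =>
    (aux_measurable_lapPDF b).ennreal_ofReal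
  set p : ℝ≥0∞ := ENNReal.ofReal (b₂ ^ 2 / b₁ ^ 2) with hp
  set q : ℝ≥0∞ := ENNReal.ofReal (1 - b₂ ^ 2 / b₁ ^ 2) with hq
  have hstep1 : Measure.conv (laplaceMeasure b₂) (lapBridge b₂ b₁) =
      p • laplaceMeasure b₂ +
        q • (laplaceMeasure b₂).conv (laplaceMeasure b₁) := by
    unfold lapBridge
    rw [Measure.conv_add, aux_conv_smul_right, aux_conv_smul_right,
      Measure.conv_dirac_zero]
  rw [hstep1]
  have hdens : Measurable fun z => ∫⁻ x,
      ENNReal.ofReal (laplacePDFReal b₂ x) * ENNReal.ofReal (laplacePDFReal b₁ (z - x)) := by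
    apply Measurable.lintegral_prod_right
      (f := fun z x => ENNReal.ofReal (laplacePDFReal b₂ x) *
        ENNReal.ofReal (laplacePDFReal b₁ (z - x)))
    exact ((hmf b₂).comp measurable_snd).mul
      ((hmf b₁).comp (measurable_fst.sub measurable_snd))
  have hstep2 : (laplaceMeasure b₂).conv (laplaceMeasure b₁) =
      volume.withDensity fun z => ∫⁻ x,
        ENNReal.ofReal (laplacePDFReal b₂ x) * ENNReal.ofReal (laplacePDFReal b₁ (z - x)) := by
    unfold laplaceMeasure
    exact aux_conv_withDensity _ _ (hmf b₂) (hmf b₁)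
  rw [hstep2]
  unfold laplaceMeasure
  rw [← withDensity_smul p (hmf b₂), ← withDensity_smul q hdens,
    ← withDensity_add_right _ (hdens.const_smul q)]
  congr 1
  funext z
  simp only [Pi.add_apply, Pi.smul_apply, smul_eq_mul]
  rw [aux_lap_conv_lintegral hb₂ hb z]
  have hple : (0:ℝ) ≤ b₂ ^ 2 / b₁ ^ 2 := by positivity
  have hqle : (0:ℝ) ≤ 1 - b₂ ^ 2 / b₁ ^ 2 := by
    have h1 : b₂ ^ 2 < b₁ ^ 2 := by nlinarith
    have h2 : b₂ ^ 2 / b₁ ^ 2 < 1 := by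
      rw [div_lt_one (by positivity)]; exact h1
    linarith
  rw [hp, hq, ← ENNReal.ofReal_mul hple, ← ENNReal.ofReal_mul hqle,
    ← ENNReal.ofReal_add
      (mul_nonneg hple (aux_lapPDF_nonneg hb₂ z))
      (mul_nonneg hqle (aux_lap_conv_real_nonneg hb₂ hb z))]
  congr 1
  unfold laplacePDFReal
  have hne1 : b₁ + b₂ ≠ 0 := by positivity
  have hne2 : b₁ - b₂ ≠ 0 := sub_ne_zero.mpr hb.ne'
  have hne3 : b₁ ^ 2 - b₂ ^ 2 ≠ 0 := by
    intro h; apply hne2; nlinarith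
  field_simp
  ring
end

section
/- For distinct positive scale parameters b₁ ≠ b₂, the convolution of the Laplace densities f_{b₁} and f_{b₂} is (f_{b₁} ∗ f_{b₂})(t) = (1/(2(b₁² − b₂²)))·(b₁·e^{−|t|/b₁} − b₂·e^{−|t|/b₂}) for all t ∈ ℝ. -/
open MeasureTheory Set

lemma exp_mul_int_Ioi {c : ℝ} (t : ℝ) (hc : 0 < c) :
    ∫ x in Ioi t, Real.exp (-(c * x)) = c⁻¹ * Real.exp (-(c * t)) := by
  have h := integral_comp_mul_left_Ioi (fun y => Real.exp (-y)) t hc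
  simp only [integral_exp_neg_Ioi, smul_eq_mul] at h
  exact h

lemma exp_mul_intOn_Ioi {c : ℝ} (t : ℝ) (hc : 0 < c) :
    IntegrableOn (fun x => Real.exp (-(c * x))) (Ioi t) := by
  simpa [neg_mul] using exp_neg_integrableOn_Ioi t hc

lemma exp_mul_int_Iic {c : ℝ} (hc : 0 < c) :
    ∫ x in Iic (0:ℝ), Real.exp (c * x) = c⁻¹ := by
  have h := integral_comp_neg_Iic (0:ℝ) (fun x => Real.exp (-(c * x)))
  simp only [mul_neg, neg_neg, neg_zero] at h
  rw [h, exp_mul_int_Ioi 0 hc]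
  simp

lemma exp_mul_intOn_Iic {c : ℝ} (hc : 0 < c) :
    IntegrableOn (fun x => Real.exp (c * x)) (Iic (0:ℝ)) := by
  have A : MeasurableEmbedding (fun x : ℝ => -x) :=
    (Homeomorph.neg ℝ).isClosedEmbedding.measurableEmbedding
  have hvol : (volume : Measure ℝ) = Measure.map (fun x : ℝ => -x) volume :=
    (Measure.map_neg_eq_self _).symm
  rw [hvol, A.integrableOn_map_iff]
  have : ((fun x : ℝ => -x) ⁻¹' Iic (0:ℝ)) = Ici 0 := by
    ext x; simp
  rw [this, integrableOn_Ici_iff_integrableOn_Ioi]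
  have := exp_mul_intOn_Ioi 0 hc
  refine this.congr_fun (fun x _ => ?_) measurableSet_Ioi
  simp [Function.comp, mul_neg]

lemma conv_exp (b₁ b₂ : ℝ) (hb₁ : 0 < b₁) (hb₂ : 0 < b₂) (hne : b₁ ≠ b₂) {t : ℝ} (ht : 0 ≤ t) :
    ∫ x, Real.exp (-|x| / b₁) * Real.exp (-|t - x| / b₂) =
      (b₁⁻¹ + b₂⁻¹)⁻¹ * (Real.exp (-t / b₁) + Real.exp (-t / b₂)) +
      (b₂⁻¹ - b₁⁻¹)⁻¹ * (Real.exp (-t / b₁) - Real.exp (-t / b₂)) := by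
  have hb₁' : b₁ ≠ 0 := hb₁.ne'
  have hb₂' : b₂ ≠ 0 := hb₂.ne'
  set c : ℝ := b₁⁻¹ + b₂⁻¹ with hcdef
  set d : ℝ := b₂⁻¹ - b₁⁻¹ with hddef
  have hc : 0 < c := by positivity
  have hd : d ≠ 0 := sub_ne_zero.2 fun h => hne (by
    have := inv_injective h; exact this.symm)
  -- pointwise descriptions on the three regions
  have h1 : ∀ x ∈ Iic (0:ℝ), Real.exp (-|x| / b₁) * Real.exp (-|t - x| / b₂)
      = Real.exp (-t / b₂) * Real.exp (c * x) := by
    intro x hx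
    simp only [mem_Iic] at hx
    rw [abs_of_nonpos hx, abs_of_nonneg (by linarith : (0:ℝ) ≤ t - x), ← Real.exp_add,
      ← Real.exp_add]
    congr 1
    rw [hcdef]
    field_simp [hcdef, hddef]
    ring
  have h2 : ∀ x ∈ Ioc (0:ℝ) t, Real.exp (-|x| / b₁) * Real.exp (-|t - x| / b₂)
      = Real.exp (-t / b₂) * Real.exp (d * x) := by
    intro x hx
    simp only [mem_Ioc] at hx
    rw [abs_of_nonneg hx.1.le, abs_of_nonneg (by linarith : (0:ℝ) ≤ t - x), ← Real.exp_add,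
      ← Real.exp_add]
    congr 1
    rw [hddef]
    field_simp [hcdef, hddef]
    ring
  have h3 : ∀ x ∈ Ioi t, Real.exp (-|x| / b₁) * Real.exp (-|t - x| / b₂)
      = Real.exp (t / b₂) * Real.exp (-(c * x)) := by
    intro x hx
    simp only [mem_Ioi] at hx
    rw [abs_of_nonneg (by linarith : (0:ℝ) ≤ x), abs_of_nonpos (by linarith : t - x ≤ 0),
      ← Real.exp_add, ← Real.exp_add]
    congr 1
    rw [hcdef]
    field_simp [hcdef, hddef]
    ring
  -- integrability on the three regions
  have i1 : IntegrableOn (fun x => Real.exp (-|x| / b₁) * Real.exp (-|t - x| / b₂)) (Iic 0) := by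
    have h : IntegrableOn (fun x => Real.exp (-t / b₂) * Real.exp (c * x)) (Iic (0:ℝ)) :=
      (exp_mul_intOn_Iic hc).const_mul _
    exact h.congr_fun (fun x hx => (h1 x hx).symm) measurableSet_Iic
  have i2 : IntegrableOn (fun x => Real.exp (-|x| / b₁) * Real.exp (-|t - x| / b₂)) (Ioc 0 t) := by
    apply Continuous.integrableOn_Ioc
    fun_prop
  have i3 : IntegrableOn (fun x => Real.exp (-|x| / b₁) * Real.exp (-|t - x| / b₂)) (Ioi t) := by
    have h : IntegrableOn (fun x => Real.exp (t / b₂) * Real.exp (-(c * x))) (Ioi t) :=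
      (exp_mul_intOn_Ioi t hc).const_mul _
    exact h.congr_fun (fun x hx => (h3 x hx).symm) measurableSet_Ioi
  have i23 : IntegrableOn (fun x => Real.exp (-|x| / b₁) * Real.exp (-|t - x| / b₂)) (Ioi 0) := by
    rw [← Ioc_union_Ioi_eq_Ioi ht]
    exact i2.union i3
  rw [← intervalIntegral.integral_Iic_add_Ioi i1 i23, ← Ioc_union_Ioi_eq_Ioi ht,
    setIntegral_union (Ioc_disjoint_Ioi le_rfl) measurableSet_Ioi i2 i3,
    setIntegral_congr_fun measurableSet_Iic h1,
    setIntegral_congr_fun measurableSet_Ioc h2,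
    setIntegral_congr_fun measurableSet_Ioi h3,
    integral_const_mul, integral_const_mul, integral_const_mul,
    exp_mul_int_Iic hc, exp_mul_int_Ioi t hc]
  have hmid : ∫ x in Ioc (0:ℝ) t, Real.exp (d * x) = d⁻¹ * (Real.exp (d * t) - 1) := by
    rw [← intervalIntegral.integral_of_le ht,
      intervalIntegral.integral_comp_mul_left (fun y => Real.exp y) hd]
    simp [integral_exp, mul_comm]
  rw [hmid]
  have h' : Real.exp (d * t) * Real.exp (-t / b₂) = Real.exp (-t / b₁) := by
    rw [← Real.exp_add]; congr 1; rw [hddef]; field_simp; ring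
  have h'' : Real.exp (-(c * t)) * Real.exp (t / b₂) = Real.exp (-t / b₁) := by
    rw [← Real.exp_add]; congr 1; rw [hcdef]; field_simp; ring
  have e2 : Real.exp (-t / b₂) * (d⁻¹ * (Real.exp (d * t) - 1))
      = d⁻¹ * (Real.exp (-t / b₁) - Real.exp (-t / b₂)) := by
    linear_combination d⁻¹ * h'
  have e3 : Real.exp (t / b₂) * (c⁻¹ * Real.exp (-(c * t)))
      = c⁻¹ * Real.exp (-t / b₁) := by
    linear_combination c⁻¹ * h''
  rw [e2, e3]
  ring

theorem stmt_10 (b₁ b₂ : ℝ) (hb₁ : 0 < b₁) (hb₂ : 0 < b₂) (hne : b₁ ≠ b₂) (t : ℝ) :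
    ∫ x, laplacePDFReal b₁ x * laplacePDFReal b₂ (t - x) =
      (1 / (2 * (b₁ ^ 2 - b₂ ^ 2))) *
        (b₁ * Real.exp (-|t| / b₁) - b₂ * Real.exp (-|t| / b₂)) := by
  have hb₁' : b₁ ≠ 0 := hb₁.ne'
  have hb₂' : b₂ ≠ 0 := hb₂.ne'
  have main : ∀ s : ℝ, 0 ≤ s →
      ∫ x, laplacePDFReal b₁ x * laplacePDFReal b₂ (s - x) =
        (1 / (2 * (b₁ ^ 2 - b₂ ^ 2))) *
          (b₁ * Real.exp (-|s| / b₁) - b₂ * Real.exp (-|s| / b₂)) := by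
    intro s hs
    have heq : ∀ x, laplacePDFReal b₁ x * laplacePDFReal b₂ (s - x)
        = (1 / (2 * b₁) * (1 / (2 * b₂))) * (Real.exp (-|x| / b₁) * Real.exp (-|s - x| / b₂)) := by
      intro x; unfold laplacePDFReal; ring
    simp_rw [heq]
    rw [integral_const_mul, conv_exp b₁ b₂ hb₁ hb₂ hne hs, abs_of_nonneg hs]
    have hsum : b₁ + b₂ ≠ 0 := by positivity
    have hdiff : b₁ - b₂ ≠ 0 := sub_ne_zero.2 hne
    have hsq : b₁ ^ 2 - b₂ ^ 2 ≠ 0 := by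
      intro h
      apply hdiff
      have : (b₁ - b₂) * (b₁ + b₂) = 0 := by ring_nf; linarith [h]
      rcases mul_eq_zero.1 this with h' | h'
      · exact h'
      · exact absurd h' hsum
    have hinv1 : (b₁⁻¹ + b₂⁻¹)⁻¹ = b₁ * b₂ / (b₁ + b₂) := by
      rw [eq_div_iff hsum]; field_simp; ring
    have hinv2 : (b₂⁻¹ - b₁⁻¹)⁻¹ = b₁ * b₂ / (b₁ - b₂) := by
      rw [eq_div_iff hdiff]; field_simp
    rw [hinv1, hinv2]
    field_simp
    ring
  rcases le_total 0 t with ht | ht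
  · exact main t ht
  · have key := main (-t) (by linarith)
    have swap : ∫ x, laplacePDFReal b₁ x * laplacePDFReal b₂ (t - x)
        = ∫ x, laplacePDFReal b₁ x * laplacePDFReal b₂ (-t - x) := by
      calc ∫ x, laplacePDFReal b₁ x * laplacePDFReal b₂ (t - x)
          = ∫ x, laplacePDFReal b₁ (-x) * laplacePDFReal b₂ (-t - (-x)) := by
            refine integral_congr_ae (Filter.Eventually.of_forall fun x => ?_)
            unfold laplacePDFReal
            have hx : |-t - -x| = |t - x| := by
              rw [show -t - -x = -(t - x) by ring, abs_neg]
            have hx' : |-t + x| = |t - x| := by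
              rw [show -t + x = -(t - x) by ring, abs_neg]
            simp [hx, hx', abs_neg]
        _ = ∫ x, laplacePDFReal b₁ x * laplacePDFReal b₂ (-t - x) :=
            integral_neg_eq_self (fun y => laplacePDFReal b₁ y * laplacePDFReal b₂ (-t - y)) volume
    rw [swap, key, abs_neg]
end
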